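/- Fix η₀ = 1/16 and assume k is a multiple of 16 and large enough. There exists a symmetric k×k matrix B with entries in {-1,1} such that: (i) for every a ≠ b in [k], the inner product of rows satisfies |⟨B_{a,·}, B_{b,·}⟩| ≤ k/4; and (ii) for any disjoint subsets X, Y of [k] with |X| = |Y| = η₀k and any bijections π₁ : [η₀k] → X, π₂ : [η₀k] → Y, one has Σ_{a,b=1}^{η₀k} (B_{π₁(a),π₁(b)} - B_{π₂(a),π₂(b)})² ≥ η₀²k²/2. -/

import Mathlib

open Finset Real

noncomputable def sg (b : Bool) : ℝ := if b then 1 else -1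

lemma sg_beq (a b : Bool) : sg a * sg (a == b) = sg b := by cases a <;> cases b <;> simp [sg]
lemma beq_beq (a b : Bool) : (a == (a == b)) = b := by cases a <;> cases b <;> simp
lemma abs_sg (b : Bool) : |sg b| = 1 := by cases b <;> simp [sg]
lemma sg_not (b : Bool) : sg (!b) = - sg b := by cases b <;> simp [sg]
lemma sg_le_one (b : Bool) : sg b ≤ 1 := by cases b <;> simp [sg]
lemma sg_sq (b : Bool) : sg b ^ 2 = 1 := by cases b <;> simp [sg]
lemma sg_mul_le_one (a b : Bool) : sg a * sg b ≤ 1 := by cases a <;> cases b <;> simp [sg]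


lemma sum_reindex {ι J : Type*} [Fintype ι] [DecidableEq ι] [Fintype J] [DecidableEq J]
    (v : J → ι) (hv : Function.Injective v) (F : (J → Bool) → ℝ) :
    ∑ g : ι → Bool, F (g ∘ v) =
      2 ^ (Fintype.card ι - Fintype.card J) * ∑ x : J → Bool, F x := by
  classical
  set C := {i : ι // i ∉ Set.range v}
  let e1 : J ⊕ C ≃ ι :=
    ((Equiv.ofInjective v hv).sumCongr (Equiv.refl C)).trans
      (Equiv.sumCompl (· ∈ Set.range v))
  let E : (ι → Bool) ≃ ((J → Bool) × (C → Bool)) :=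
    ((e1.arrowCongr (Equiv.refl Bool)).symm).trans (Equiv.sumArrowEquivProdArrow _ _ _)
  have key : ∀ p : (J → Bool) × (C → Bool), (E.symm p) ∘ v = p.1 := by
    intro p
    funext j
    show (E.symm p) (v j) = p.1 j
    have : E.symm p = (Sum.elim p.1 p.2) ∘ e1.symm := by
      funext i
      simp [E, Equiv.sumArrowEquivProdArrow, Equiv.arrowCongr]
    rw [this]
    have h1 : e1.symm (v j) = Sum.inl j := by
      apply e1.injective
      simp [e1, Equiv.sumCompl]
    simp [h1]
  have hC : Fintype.card C = Fintype.card ι - Fintype.card J := by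
    have h2 : Fintype.card {i : ι // i ∈ Set.range v} = Fintype.card J :=
      (Fintype.card_congr (Equiv.ofInjective v hv)).symm
    rw [Fintype.card_subtype_compl, h2]
  rw [← Equiv.sum_comp E.symm (fun g => F (g ∘ v))]
  calc ∑ p : (J → Bool) × (C → Bool), F ((E.symm p) ∘ v)
      = ∑ p : (J → Bool) × (C → Bool), F p.1 := Fintype.sum_congr _ _ (fun p => by rw [key])
    _ = ∑ x : J → Bool, ∑ _y : C → Bool, F x := Fintype.sum_prod_type _
    _ = ∑ x : J → Bool, 2 ^ (Fintype.card ι - Fintype.card J) * F x := by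
        refine Finset.sum_congr rfl fun x _ => ?_
        rw [Finset.sum_const, card_univ, Fintype.card_fun, Fintype.card_bool, hC,
          nsmul_eq_mul]
        push_cast
        ring
    _ = 2 ^ (Fintype.card ι - Fintype.card J) * ∑ x : J → Bool, F x := by
        rw [Finset.mul_sum]

lemma sum_pair_reduce {ι J : Type*} [Fintype ι] [DecidableEq ι] [Fintype J] [DecidableEq J]
    (u v : J → ι) (hv : Function.Injective v) (huv : ∀ j j', u j ≠ v j')
    (F : (J → ℝ) → ℝ) :
    ∑ g : ι → Bool, F (fun j => sg (g (u j)) * sg (g (v j))) =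
      2 ^ (Fintype.card ι - Fintype.card J) * ∑ x : J → Bool, F (fun j => sg (x j)) := by
  classical
  set Ψ : (ι → Bool) → (ι → Bool) := fun g i =>
    if h : ∃ j, v j = i then (g (u (Classical.choose h)) == g i) else g i with hΨ
  have hu_eq : ∀ (g : ι → Bool) (j : J), Ψ g (u j) = g (u j) := by
    intro g j
    have : ¬ ∃ j', v j' = u j := by
      rintro ⟨j', hj'⟩; exact huv j j' hj'.symm
    simp [Ψ, this]
  have hv_eq : ∀ (g : ι → Bool) (j : J), Ψ g (v j) = (g (u j) == g (v j)) := by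
    intro g j
    have h : ∃ j', v j' = v j := ⟨j, rfl⟩
    have hch : Classical.choose h = j := hv (Classical.choose_spec h)
    simp only [Ψ, dif_pos h, hch]
  have hinv : Function.Involutive Ψ := by
    intro g
    funext i
    by_cases h : ∃ j, v j = i
    · obtain ⟨j, hj⟩ := h
      subst hj
      rw [hv_eq, hu_eq, hv_eq, beq_beq]
    · simp [Ψ, h]
  have step1 : ∑ g : ι → Bool, F (fun j => sg (g (u j)) * sg (g (v j))) =
      ∑ g : ι → Bool, F (fun j => sg (g (v j))) := by
    rw [← Function.Bijective.sum_comp hinv.bijective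
      (fun g => F (fun j => sg (g (u j)) * sg (g (v j))))]
    refine Fintype.sum_congr _ _ fun g => ?_
    congr 1
    funext j
    rw [hu_eq, hv_eq, sg_beq]
  rw [step1]
  exact sum_reindex v hv (fun x => F (fun j => sg (x j)))

lemma sum_exp_sg {J : Type*} [Fintype J] [DecidableEq J] (c : ℝ) :
    ∑ x : J → Bool, Real.exp (c * ∑ j, sg (x j)) =
      (Real.exp c + Real.exp (-c)) ^ Fintype.card J := by
  have h1 : ∀ x : J → Bool, Real.exp (c * ∑ j, sg (x j)) = ∏ j, Real.exp (c * sg (x j)) := by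
    intro x
    rw [Finset.mul_sum, Real.exp_sum]
  simp only [h1]
  rw [← Fintype.prod_sum (fun (_ : J) (b : Bool) => Real.exp (c * sg b))]
  have h2 : ∀ _j : J, ∑ b : Bool, Real.exp (c * sg b) = Real.exp c + Real.exp (-c) := by
    intro j
    rw [Fintype.sum_bool]
    simp [sg, mul_comm, mul_neg, mul_one]
  rw [Fintype.prod_congr _ _ h2, Finset.prod_const, card_univ]

lemma exp_add_exp_neg_le {c : ℝ} (h0 : 0 ≤ c) (h1 : c ≤ 1) :
    Real.exp c + Real.exp (-c) ≤ 2 * Real.exp (c ^ 2) := by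
  have habs : |c| ≤ 1 := by rwa [abs_of_nonneg h0]
  have habs' : |(-c)| ≤ 1 := by rwa [abs_neg]
  have hb1 := Real.exp_bound habs (n := 2) (by norm_num)
  have hb2 := Real.exp_bound habs' (n := 2) (by norm_num)
  have e1 : Real.exp c ≤ 1 + c + (3 / 4) * c ^ 2 := by
    have := abs_le.mp hb1
    simp [Finset.sum_range_succ, Nat.factorial] at this ⊢
    nlinarith [this.2, abs_of_nonneg h0]
  have e2 : Real.exp (-c) ≤ 1 - c + (3 / 4) * c ^ 2 := by
    have := abs_le.mp hb2
    simp [Finset.sum_range_succ, Nat.factorial] at this ⊢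
    nlinarith [this.2, abs_of_nonneg h0]
  have e3 : (1 : ℝ) + c ^ 2 ≤ Real.exp (c ^ 2) := by
    have := Real.add_one_le_exp (c ^ 2)
    linarith
  nlinarith

lemma chernoff_count {J : Type*} [Fintype J] [DecidableEq J] {t : ℝ} (ht : 0 < t) :
    ((univ.filter (fun x : J → Bool => t ≤ ∑ j, sg (x j))).card : ℝ)
      ≤ 2 ^ Fintype.card J * Real.exp (-t ^ 2 / (4 * Fintype.card J)) := by
  classical
  set n := Fintype.card J with hn
  by_cases hnt : (n : ℝ) < t
  · -- sum is at most n, so the filter is empty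
    have : (univ.filter (fun x : J → Bool => t ≤ ∑ j, sg (x j))) = ∅ := by
      refine Finset.filter_eq_empty_iff.mpr fun x _ => ?_
      push_neg
      calc ∑ j, sg (x j) ≤ ∑ _j : J, (1 : ℝ) := Finset.sum_le_sum fun j _ => sg_le_one _
        _ = n := by simp [hn]
        _ < t := hnt
    rw [this]
    simp
    positivity
  · push_neg at hnt
    have hn0 : 0 < (n : ℝ) := lt_of_lt_of_le ht hnt
    set lam : ℝ := t / (2 * n) with hlam
    have hlam0 : 0 ≤ lam := by positivity
    have hlam1 : lam ≤ 1 := by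
      rw [hlam, div_le_one (by positivity)]
      linarith
    -- count * exp (lam * t) ≤ sum of exp
    have key : ((univ.filter (fun x : J → Bool => t ≤ ∑ j, sg (x j))).card : ℝ)
        * Real.exp (lam * t) ≤ ∑ x : J → Bool, Real.exp (lam * ∑ j, sg (x j)) := by
      calc ((univ.filter (fun x : J → Bool => t ≤ ∑ j, sg (x j))).card : ℝ) * Real.exp (lam * t)
          = ∑ _x ∈ univ.filter (fun x : J → Bool => t ≤ ∑ j, sg (x j)), Real.exp (lam * t) := by
            rw [Finset.sum_const, nsmul_eq_mul]
        _ ≤ ∑ x ∈ univ.filter (fun x : J → Bool => t ≤ ∑ j, sg (x j)),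
              Real.exp (lam * ∑ j, sg (x j)) := by
            refine Finset.sum_le_sum fun x hx => ?_
            have := (Finset.mem_filter.mp hx).2
            exact Real.exp_le_exp.mpr (by nlinarith)
        _ ≤ ∑ x : J → Bool, Real.exp (lam * ∑ j, sg (x j)) :=
            Finset.sum_le_sum_of_subset_of_nonneg (Finset.filter_subset _ _)
              (fun x _ _ => (Real.exp_pos _).le)
    rw [sum_exp_sg] at key
    have hmgf : (Real.exp lam + Real.exp (-lam)) ^ n ≤ (2 * Real.exp (lam ^ 2)) ^ n := by
      refine pow_le_pow_left₀ (by positivity) (exp_add_exp_neg_le hlam0 hlam1) n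
    have key2 : ((univ.filter (fun x : J → Bool => t ≤ ∑ j, sg (x j))).card : ℝ)
        ≤ (2 * Real.exp (lam ^ 2)) ^ n * Real.exp (-(lam * t)) := by
      calc ((univ.filter (fun x : J → Bool => t ≤ ∑ j, sg (x j))).card : ℝ)
          = ((univ.filter (fun x : J → Bool => t ≤ ∑ j, sg (x j))).card : ℝ)
            * Real.exp (lam * t) * Real.exp (-(lam*t)) := by
            rw [mul_assoc, ← Real.exp_add]; simp
        _ ≤ (Real.exp lam + Real.exp (-lam)) ^ n * Real.exp (-(lam*t)) := by
            apply mul_le_mul_of_nonneg_right key (Real.exp_pos _).le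
        _ ≤ (2 * Real.exp (lam ^ 2)) ^ n * Real.exp (-(lam*t)) := by
            apply mul_le_mul_of_nonneg_right hmgf (Real.exp_pos _).le
    calc ((univ.filter (fun x : J → Bool => t ≤ ∑ j, sg (x j))).card : ℝ)
        ≤ (2 * Real.exp (lam ^ 2)) ^ n * Real.exp (-(lam * t)) := key2
      _ = 2 ^ n * Real.exp (n * lam ^ 2 - lam * t) := by
          rw [mul_pow, ← Real.exp_nat_mul, mul_assoc, ← Real.exp_add]
          ring_nf
      _ = 2 ^ n * Real.exp (-t ^ 2 / (4 * n)) := by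
          congr 1
          apply congrArg
          rw [hlam]
          field_simp
          ring
lemma chernoff_count_abs {J : Type*} [Fintype J] [DecidableEq J] {t : ℝ} (ht : 0 < t) :
    ((univ.filter (fun x : J → Bool => t ≤ |∑ j, sg (x j)|)).card : ℝ)
      ≤ 2 * (2 ^ Fintype.card J * Real.exp (-t ^ 2 / (4 * Fintype.card J))) := by
  classical
  set A := univ.filter (fun x : J → Bool => t ≤ ∑ j, sg (x j)) with hA
  set Bs := univ.filter (fun x : J → Bool => t ≤ -∑ j, sg (x j)) with hB
  have hsub : (univ.filter (fun x : J → Bool => t ≤ |∑ j, sg (x j)|)) ⊆ A ∪ Bs := by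
    intro x hx
    have hx2 := (Finset.mem_filter.mp hx).2
    rcases le_abs.mp hx2 with h | h
    · exact Finset.mem_union_left _ (Finset.mem_filter.mpr ⟨Finset.mem_univ _, h⟩)
    · exact Finset.mem_union_right _ (Finset.mem_filter.mpr ⟨Finset.mem_univ _, h⟩)
  have hcard : Bs.card = A.card := by
    apply Finset.card_bij (fun x _ => fun j => !(x j))
    · intro x hx
      refine Finset.mem_filter.mpr ⟨Finset.mem_univ _, ?_⟩
      have hx2 := (Finset.mem_filter.mp hx).2
      calc t ≤ -∑ j, sg (x j) := hx2
        _ = ∑ j, sg (!(x j)) := by rw [← Finset.sum_neg_distrib]; exact Finset.sum_congr rfl fun j _ => (sg_not _).symm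
    · intro x hx y hy hxy
      funext j
      have := congrFun hxy j
      simpa using this
    · intro y hy
      refine ⟨fun j => !(y j), ?_, by funext j; simp⟩
      refine Finset.mem_filter.mpr ⟨Finset.mem_univ _, ?_⟩
      have hy2 := (Finset.mem_filter.mp hy).2
      have : ∑ j, sg (!(y j)) = -∑ j, sg (y j) := by
        rw [← Finset.sum_neg_distrib]; exact Finset.sum_congr rfl fun j _ => sg_not _
      linarith [hy2, this.ge, this.le]
  calc ((univ.filter (fun x : J → Bool => t ≤ |∑ j, sg (x j)|)).card : ℝ)
      ≤ ((A ∪ Bs).card : ℝ) := by exact_mod_cast Nat.cast_le.mpr (Finset.card_le_card hsub)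
    _ ≤ (A.card : ℝ) + Bs.card := by exact_mod_cast Nat.cast_le.mpr (Finset.card_union_le _ _)
    _ = 2 * (A.card : ℝ) := by rw [hcard]; ring
    _ ≤ 2 * (2 ^ Fintype.card J * Real.exp (-t ^ 2 / (4 * Fintype.card J))) := by
        have := chernoff_count (J := J) ht
        linarith

lemma sym_sum_split {m : ℕ} (f : Fin m → Fin m → ℝ) (hf : ∀ a b, f a b = f b a) :
    ∑ a, ∑ b, f a b = (∑ a, f a a)
      + 2 * ∑ p : {p : Fin m × Fin m // p.1 < p.2}, f p.1.1 p.1.2 := by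
  classical
  have h0 : ∑ a, ∑ b, f a b = ∑ p : Fin m × Fin m, f p.1 p.2 := by
    rw [Fintype.sum_prod_type]
  have hJ : ∑ p : {p : Fin m × Fin m // p.1 < p.2}, f p.1.1 p.1.2
      = ∑ p ∈ univ.filter (fun p : Fin m × Fin m => p.1 < p.2), f p.1 p.2 := by
    exact (Finset.sum_subtype (p := fun p : Fin m × Fin m => p.1 < p.2)
      (univ.filter (fun p : Fin m × Fin m => p.1 < p.2))
      (by intro x; simp) (fun p : Fin m × Fin m => f p.1 p.2)).symm
  have hsplit1 : ∑ p : Fin m × Fin m, f p.1 p.2 =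
      (∑ p ∈ univ.filter (fun p : Fin m × Fin m => p.1 < p.2), f p.1 p.2)
      + ∑ p ∈ univ.filter (fun p : Fin m × Fin m => ¬ p.1 < p.2), f p.1 p.2 :=
    (Finset.sum_filter_add_sum_filter_not _ _ _).symm
  have hsplit2 : ∑ p ∈ univ.filter (fun p : Fin m × Fin m => ¬ p.1 < p.2), f p.1 p.2 =
      (∑ p ∈ univ.filter (fun p : Fin m × Fin m => p.2 < p.1), f p.1 p.2)
      + ∑ a, f a a := by
    rw [← Finset.sum_filter_add_sum_filter_not
      (univ.filter (fun p : Fin m × Fin m => ¬ p.1 < p.2))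
      (fun p => p.2 < p.1) (fun p => f p.1 p.2)]
    congr 1
    · apply Finset.sum_congr _ (fun _ _ => rfl)
      rw [Finset.filter_filter]
      apply Finset.filter_congr
      intro p _
      constructor
      · rintro ⟨-, h⟩; exact h
      · intro h; exact ⟨asymm h, h⟩
    · rw [Finset.filter_filter]
      have : (univ.filter (fun p : Fin m × Fin m => (¬ p.1 < p.2) ∧ ¬ p.2 < p.1))
          = univ.filter (fun p : Fin m × Fin m => p.1 = p.2) := by
        apply Finset.filter_congr
        intro p _
        constructor
        · rintro ⟨h1, h2⟩; exact le_antisymm (not_lt.mp h2) (not_lt.mp h1)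
        · intro h; rw [h]; exact ⟨lt_irrefl _, lt_irrefl _⟩
      rw [this]
      rw [Finset.sum_filter]
      rw [Fintype.sum_prod_type]
      apply Finset.sum_congr rfl
      intro a _
      simp
  have hswap : ∑ p ∈ univ.filter (fun p : Fin m × Fin m => p.2 < p.1), f p.1 p.2 =
      ∑ p ∈ univ.filter (fun p : Fin m × Fin m => p.1 < p.2), f p.1 p.2 := by
    apply Finset.sum_nbij' (fun p => Prod.swap p) (fun p => Prod.swap p)
    · intro p hp; simp at hp ⊢; exact hp
    · intro p hp; simp at hp ⊢; exact hp
    · intro p _; simp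
    · intro p _; simp
    · intro p _; exact hf _ _
  rw [h0, hsplit1, hsplit2, hswap, hJ]
  ring

lemma event1 {k : ℕ} (hk : 40 ≤ k) (a b : Fin k) (hab : a ≠ b) :
    ((univ.filter fun g : Sym2 (Fin k) → Bool =>
        (k : ℝ) / 4 < |∑ c, sg (g s(a, c)) * sg (g s(b, c))|).card : ℝ)
      ≤ 2 ^ Fintype.card (Sym2 (Fin k)) * (2 * Real.exp (-(k : ℝ) / 100)) := by
  classical
  set T : Finset (Fin k) := univ \ {a, b} with hT
  have hmemT : ∀ c : Fin k, c ∈ T ↔ (c ≠ a ∧ c ≠ b) := by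
    intro c; simp [hT]
  set u : T → Sym2 (Fin k) := fun c => s(a, (c : Fin k)) with hu
  set v : T → Sym2 (Fin k) := fun c => s(b, (c : Fin k)) with hvdef
  have hv : Function.Injective v := by
    intro c c' h
    rw [hvdef] at h
    simp only at h
    rw [Sym2.eq_iff] at h
    rcases h with ⟨-, h2⟩ | ⟨h1, -⟩
    · exact Subtype.ext h2
    · exact absurd h1.symm ((hmemT _).mp c'.2).2
  have huv : ∀ j j', u j ≠ v j' := by
    intro j j' h
    rw [hu, hvdef] at h
    simp only at h
    rw [Sym2.eq_iff] at h
    rcases h with ⟨h1, -⟩ | ⟨h1, -⟩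
    · exact hab h1
    · exact absurd h1.symm ((hmemT _).mp j'.2).1
  have hcardT : T.card = k - 2 := by
    rw [hT, Finset.card_sdiff_of_subset (Finset.subset_univ _), Finset.card_pair hab, Finset.card_univ,
      Fintype.card_fin]
  have hcardJ : Fintype.card T = k - 2 := by rw [Fintype.card_coe, hcardT]
  have hk2 : (2 : ℕ) ≤ k := by omega
  -- decompose the sum
  have hsplit : ∀ g : Sym2 (Fin k) → Bool,
      ∑ c, sg (g s(a, c)) * sg (g s(b, c)) =
        (∑ j : T, sg (g (u j)) * sg (g (v j)))
          + (sg (g s(a,a)) * sg (g s(b,a)) + sg (g s(a,b)) * sg (g s(b,b))) := by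
    intro g
    have h1 : (∑ c ∈ T, sg (g s(a, c)) * sg (g s(b, c)))
        + ∑ c ∈ {a, b}, sg (g s(a, c)) * sg (g s(b, c))
        = ∑ c, sg (g s(a, c)) * sg (g s(b, c)) :=
      Finset.sum_sdiff (Finset.subset_univ _)
    rw [← h1, Finset.sum_pair hab]
    congr 1
    exact (Finset.sum_coe_sort T _).symm
  -- event inclusion
  have hincl : (univ.filter fun g : Sym2 (Fin k) → Bool =>
        (k : ℝ) / 4 < |∑ c, sg (g s(a, c)) * sg (g s(b, c))|) ⊆
      (univ.filter fun g : Sym2 (Fin k) → Bool =>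
        (k : ℝ) / 5 ≤ |∑ j : T, sg (g (u j)) * sg (g (v j))|) := by
    intro g hg
    have hg2 := (Finset.mem_filter.mp hg).2
    refine Finset.mem_filter.mpr ⟨Finset.mem_univ _, ?_⟩
    have habs : ∀ p q : Bool, |sg p * sg q| = 1 := by
      intro p q; rw [abs_mul, abs_sg, abs_sg, mul_one]
    have h3 := hsplit g
    have h4 : |∑ c, sg (g s(a, c)) * sg (g s(b, c))|
        ≤ |∑ j : T, sg (g (u j)) * sg (g (v j))| + 2 := by
      rw [h3]
      refine (abs_add_le _ _).trans ?_
      have := (abs_add_le (sg (g s(a,a)) * sg (g s(b,a))) (sg (g s(a,b)) * sg (g s(b,b))))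
      rw [habs, habs] at this
      linarith
    have hk' : (40 : ℝ) ≤ k := by exact_mod_cast hk
    nlinarith [abs_nonneg (∑ j : T, sg (g (u j)) * sg (g (v j)))]
  refine le_trans (Nat.cast_le.mpr (Finset.card_le_card hincl)) ?_
  -- indicator representation
  set F : (T → ℝ) → ℝ := fun y => if (k : ℝ) / 5 ≤ |∑ j, y j| then 1 else 0 with hF
  have hind : ((univ.filter fun g : Sym2 (Fin k) → Bool =>
        (k : ℝ) / 5 ≤ |∑ j : T, sg (g (u j)) * sg (g (v j))|).card : ℝ)
      = ∑ g : Sym2 (Fin k) → Bool, F (fun j => sg (g (u j)) * sg (g (v j))) := by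
    simp only [hF]
    rw [Finset.sum_boole]
  rw [hind, sum_pair_reduce u v hv huv F]
  have hx : ∑ x : T → Bool, F (fun j => sg (x j))
      = ((univ.filter (fun x : T → Bool => (k : ℝ) / 5 ≤ |∑ j, sg (x j)|)).card : ℝ) := by
    simp only [hF]
    rw [Finset.sum_boole]
  rw [hx]
  have hkR : (40 : ℝ) ≤ (k : ℝ) := by exact_mod_cast hk
  have ht : (0 : ℝ) < (k : ℝ) / 5 := by linarith
  have hch := chernoff_count_abs (J := T) (t := (k : ℝ) / 5) ht
  have hnle : Fintype.card T ≤ Fintype.card (Sym2 (Fin k)) := Fintype.card_le_of_injective v hv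
  have hncast : ((Fintype.card T : ℝ)) = (k : ℝ) - 2 := by
    rw [hcardJ, Nat.cast_sub hk2]; norm_num
  have hexp : Real.exp (-((k:ℝ)/5) ^ 2 / (4 * (Fintype.card T : ℝ)))
      ≤ Real.exp (-(k : ℝ) / 100) := by
    apply Real.exp_le_exp.mpr
    rw [hncast, neg_div, neg_div, neg_le_neg_iff, div_le_div_iff₀ (by linarith) (by nlinarith)]
    nlinarith
  calc (2 : ℝ) ^ (Fintype.card (Sym2 (Fin k)) - Fintype.card T)
        * ((univ.filter (fun x : T → Bool => (k : ℝ) / 5 ≤ |∑ j, sg (x j)|)).card : ℝ)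
      ≤ (2 : ℝ) ^ (Fintype.card (Sym2 (Fin k)) - Fintype.card T)
        * (2 * (2 ^ Fintype.card T * Real.exp (-((k:ℝ)/5) ^ 2 / (4 * (Fintype.card T : ℝ))))) := by
        apply mul_le_mul_of_nonneg_left hch (by positivity)
    _ = (2 : ℝ) ^ Fintype.card (Sym2 (Fin k))
        * (2 * Real.exp (-((k:ℝ)/5) ^ 2 / (4 * (Fintype.card T : ℝ)))) := by
        rw [show ∀ x y z : ℝ, x * (2 * (y * z)) = (x * y) * (2 * z) from fun x y z => by ring,
          ← pow_add, Nat.sub_add_cancel hnle]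
    _ ≤ (2 : ℝ) ^ Fintype.card (Sym2 (Fin k)) * (2 * Real.exp (-(k : ℝ) / 100)) := by
        have : (0:ℝ) ≤ (2 : ℝ) ^ Fintype.card (Sym2 (Fin k)) := by positivity
        nlinarith [hexp]

lemma event2 {k m : ℕ} (hm : 4 ≤ m) (π₁ π₂ : Fin m → Fin k)
    (h1 : Function.Injective π₁) (h2 : Function.Injective π₂)
    (hd : ∀ i j, π₁ i ≠ π₂ j) :
    ((univ.filter fun g : Sym2 (Fin k) → Bool =>
        (∑ a, ∑ b, (sg (g s(π₁ a, π₁ b)) - sg (g s(π₂ a, π₂ b))) ^ 2) < (m : ℝ) ^ 2 / 2).card : ℝ)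
      ≤ 2 ^ Fintype.card (Sym2 (Fin k)) * Real.exp (-(m : ℝ) ^ 2 / 64) := by
  classical
  set J := {p : Fin m × Fin m // p.1 < p.2} with hJdef
  set u : J → Sym2 (Fin k) := fun p => s(π₁ p.1.1, π₁ p.1.2) with hu
  set v : J → Sym2 (Fin k) := fun p => s(π₂ p.1.1, π₂ p.1.2) with hvd
  have hv : Function.Injective v := by
    intro p q h
    rw [hvd] at h; simp only at h
    rw [Sym2.eq_iff] at h
    rcases h with ⟨ha, hb⟩ | ⟨ha, hb⟩
    · exact Subtype.ext (Prod.ext (h2 ha) (h2 hb))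
    · exfalso
      have e1 : p.1.1 = q.1.2 := h2 ha
      have e2 : p.1.2 = q.1.1 := h2 hb
      have hp := p.2; have hq := q.2
      rw [e1, e2] at hp
      exact absurd hq (asymm hp)
  have huv : ∀ j j', u j ≠ v j' := by
    intro j j' h
    rw [hu, hvd] at h; simp only at h
    rw [Sym2.eq_iff] at h
    rcases h with ⟨ha, -⟩ | ⟨ha, -⟩
    · exact hd _ _ ha
    · exact hd _ _ ha
  -- key pointwise reduction
  have hkey : ∀ g : Sym2 (Fin k) → Bool,
      (∑ a, ∑ b, (sg (g s(π₁ a, π₁ b)) - sg (g s(π₂ a, π₂ b))) ^ 2) < (m : ℝ) ^ 2 / 2 →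
      (m : ℝ) ^ 2 / 4 ≤ ∑ j : J, sg (g (u j)) * sg (g (v j)) := by
    intro g hg
    set f : Fin m → Fin m → ℝ :=
      fun a b => sg (g s(π₁ a, π₁ b)) * sg (g s(π₂ a, π₂ b)) with hf
    have hfsymm : ∀ a b, f a b = f b a := by
      intro a b
      rw [hf]
      simp only
      rw [show s(π₁ b, π₁ a) = s(π₁ a, π₁ b) from Sym2.eq_swap,
        show s(π₂ b, π₂ a) = s(π₂ a, π₂ b) from Sym2.eq_swap]
    have hexpand : ∀ a b : Fin m,
        (sg (g s(π₁ a, π₁ b)) - sg (g s(π₂ a, π₂ b))) ^ 2 = 2 - 2 * f a b := by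
      intro a b
      have e1 := sg_sq (g s(π₁ a, π₁ b))
      have e2 := sg_sq (g s(π₂ a, π₂ b))
      rw [hf]; ring_nf; nlinarith [e1, e2]
    have htot : (∑ a, ∑ b, (sg (g s(π₁ a, π₁ b)) - sg (g s(π₂ a, π₂ b))) ^ 2)
        = 2 * m ^ 2 - 2 * ∑ a, ∑ b, f a b := by
      simp only [hexpand]
      simp only [Finset.sum_sub_distrib, Finset.sum_const, card_univ, Fintype.card_fin,
        nsmul_eq_mul, ← Finset.mul_sum]
      push_cast
      ring
    have hmR : (4 : ℝ) ≤ (m : ℝ) := by exact_mod_cast hm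
    have hD : ∑ a, f a a ≤ (m : ℝ) := by
      calc ∑ a, f a a ≤ ∑ _a : Fin m, (1 : ℝ) := Finset.sum_le_sum fun a _ => by
            rw [hf]; exact sg_mul_le_one _ _
        _ = (m : ℝ) := by simp
    have hsplit := sym_sum_split f hfsymm
    have hSeq : ∑ p : {p : Fin m × Fin m // p.1 < p.2}, f p.1.1 p.1.2
        = ∑ j : J, sg (g (u j)) * sg (g (v j)) := rfl
    rw [htot, hsplit, hSeq] at hg
    have hmm : (m : ℝ) ^ 2 ≥ 4 * m := by nlinarith
    by_contra hcon
    push_neg at hcon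
    set S := ∑ j : J, sg (g (u j)) * sg (g (v j)) with hSdef
    set D := ∑ a : Fin m, f a a with hDdef
    set M := (m : ℝ) ^ 2 with hMdef
    linarith
  -- containment and counting
  have hincl : (univ.filter fun g : Sym2 (Fin k) → Bool =>
        (∑ a, ∑ b, (sg (g s(π₁ a, π₁ b)) - sg (g s(π₂ a, π₂ b))) ^ 2) < (m : ℝ) ^ 2 / 2) ⊆
      (univ.filter fun g : Sym2 (Fin k) → Bool =>
        (m : ℝ) ^ 2 / 4 ≤ ∑ j : J, sg (g (u j)) * sg (g (v j))) := by
    intro g hg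
    exact Finset.mem_filter.mpr ⟨Finset.mem_univ _, hkey g (Finset.mem_filter.mp hg).2⟩
  refine le_trans (Nat.cast_le.mpr (Finset.card_le_card hincl)) ?_
  set F : (J → ℝ) → ℝ := fun y => if (m : ℝ) ^ 2 / 4 ≤ ∑ j, y j then 1 else 0 with hF
  have hind : ((univ.filter fun g : Sym2 (Fin k) → Bool =>
        (m : ℝ) ^ 2 / 4 ≤ ∑ j : J, sg (g (u j)) * sg (g (v j))).card : ℝ)
      = ∑ g : Sym2 (Fin k) → Bool, F (fun j => sg (g (u j)) * sg (g (v j))) := by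
    simp only [hF]
    rw [Finset.sum_boole]
  rw [hind, sum_pair_reduce u v hv huv F]
  have hx : ∑ x : J → Bool, F (fun j => sg (x j))
      = ((univ.filter (fun x : J → Bool => (m : ℝ) ^ 2 / 4 ≤ ∑ j, sg (x j))).card : ℝ) := by
    simp only [hF]
    rw [Finset.sum_boole]
  rw [hx]
  have hmR : (4 : ℝ) ≤ (m : ℝ) := by exact_mod_cast hm
  have ht : (0 : ℝ) < (m : ℝ) ^ 2 / 4 := by nlinarith
  have hch := chernoff_count (J := J) (t := (m : ℝ) ^ 2 / 4) ht
  have hne : Nonempty J := by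
    refine ⟨⟨(⟨0, by omega⟩, ⟨1, by omega⟩), ?_⟩⟩
    exact Fin.mk_lt_mk.mpr one_pos
  have hn1 : 1 ≤ Fintype.card J := Fintype.card_pos
  have hnm : Fintype.card J ≤ m ^ 2 := by
    calc Fintype.card J ≤ Fintype.card (Fin m × Fin m) := Fintype.card_subtype_le _
      _ = m ^ 2 := by simp [sq]
  have hnle : Fintype.card J ≤ Fintype.card (Sym2 (Fin k)) := Fintype.card_le_of_injective v hv
  have hexp : Real.exp (-((m : ℝ) ^ 2 / 4) ^ 2 / (4 * (Fintype.card J : ℝ)))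
      ≤ Real.exp (-(m : ℝ) ^ 2 / 64) := by
    apply Real.exp_le_exp.mpr
    have hn1R : (1 : ℝ) ≤ (Fintype.card J : ℝ) := by exact_mod_cast hn1
    have hnmR : (Fintype.card J : ℝ) ≤ (m : ℝ) ^ 2 := by exact_mod_cast hnm
    rw [neg_div, neg_div, neg_le_neg_iff, div_le_div_iff₀ (by linarith) (by linarith)]
    nlinarith
  calc (2 : ℝ) ^ (Fintype.card (Sym2 (Fin k)) - Fintype.card J)
        * ((univ.filter (fun x : J → Bool => (m : ℝ) ^ 2 / 4 ≤ ∑ j, sg (x j))).card : ℝ)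
      ≤ (2 : ℝ) ^ (Fintype.card (Sym2 (Fin k)) - Fintype.card J)
        * (2 ^ Fintype.card J * Real.exp (-((m : ℝ) ^ 2 / 4) ^ 2 / (4 * (Fintype.card J : ℝ)))) := by
        apply mul_le_mul_of_nonneg_left hch (by positivity)
    _ = (2 : ℝ) ^ Fintype.card (Sym2 (Fin k))
        * Real.exp (-((m : ℝ) ^ 2 / 4) ^ 2 / (4 * (Fintype.card J : ℝ))) := by
        rw [← mul_assoc, ← pow_add, Nat.sub_add_cancel hnle]
    _ ≤ (2 : ℝ) ^ Fintype.card (Sym2 (Fin k)) * Real.exp (-(m : ℝ) ^ 2 / 64) := by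
        apply mul_le_mul_of_nonneg_left hexp (by positivity)

lemma cube_le_exp {x : ℝ} (hx : 0 ≤ x) : (x / 3) ^ 3 ≤ Real.exp x := by
  have h := Real.add_one_le_exp (x / 3)
  calc (x / 3) ^ 3 ≤ (x / 3 + 1) ^ 3 := by nlinarith
    _ ≤ Real.exp (x / 3) ^ 3 := by
        apply pow_le_pow_left₀ (by positivity) h
    _ = Real.exp x := by
        rw [← Real.exp_nat_mul]
        norm_num
        rw [mul_div_cancel₀]
        norm_num

lemma num1 (k : ℕ) (hk : 18446744073709551616 ≤ k) :
    (k : ℝ) ^ 2 * (2 * Real.exp (-(k : ℝ) / 100)) < 1 / 2 := by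
  have hkR : (18446744073709551616 : ℝ) ≤ (k : ℝ) := by exact_mod_cast hk
  have hE := Real.exp_pos ((k : ℝ) / 100)
  have h1 : ((k : ℝ) / 300) ^ 3 ≤ Real.exp ((k : ℝ) / 100) := by
    have := cube_le_exp (x := (k : ℝ) / 100) (by linarith)
    convert this using 2
    ring
  have h2 : 4 * (k : ℝ) ^ 2 < Real.exp ((k : ℝ) / 100) := by
    have h3 : (k : ℝ) ^ 3 ≥ 18446744073709551616 * (k : ℝ) ^ 2 := by nlinarith
    nlinarith
  have heq : (k : ℝ) ^ 2 * (2 * Real.exp (-(k : ℝ) / 100))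
      = 2 * (k : ℝ) ^ 2 / Real.exp ((k : ℝ) / 100) := by
    rw [show -(k:ℝ)/100 = -((k:ℝ)/100) by ring, Real.exp_neg]
    ring
  rw [heq, div_lt_iff₀ hE]
  nlinarith

lemma num2 (k m : ℕ) (hk : 18446744073709551616 ≤ k) (hkm : k = 16 * m) :
    ((k : ℝ) ^ m * (k : ℝ) ^ m) * Real.exp (-(m : ℝ) ^ 2 / 64) < 1 / 2 := by
  have hkR : (18446744073709551616 : ℝ) ≤ (k : ℝ) := by exact_mod_cast hk
  have hmk : (k : ℝ) = 16 * (m : ℝ) := by exact_mod_cast hkm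
  have hm2 : 2 ≤ m := by omega
  have hE := Real.exp_pos ((m : ℝ) ^ 2 / 64)
  -- exp (m/64) ≥ 2 k^2
  have h1 : ((m : ℝ) / 192) ^ 3 ≤ Real.exp ((m : ℝ) / 64) := by
    have := cube_le_exp (x := (m : ℝ) / 64) (by positivity)
    convert this using 2
    ring
  have h2 : 2 * (k : ℝ) ^ 2 ≤ Real.exp ((m : ℝ) / 64) := by
    have h3 : (k : ℝ) ^ 3 ≥ 18446744073709551616 * (k : ℝ) ^ 2 := by nlinarith
    have h4 : ((m : ℝ) / 192) ^ 3 = (k : ℝ) ^ 3 / 28991029248 := by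
      rw [hmk]; ring
    nlinarith
  have h5 : Real.exp ((m : ℝ) ^ 2 / 64) = Real.exp ((m : ℝ) / 64) ^ m := by
    rw [← Real.exp_nat_mul]
    congr 1
    push_cast
    ring
  have h6 : (2 * (k : ℝ) ^ 2) ^ m ≤ Real.exp ((m : ℝ) ^ 2 / 64) := by
    rw [h5]
    exact pow_le_pow_left₀ (by positivity) h2 m
  have h7 : 4 * ((k : ℝ) ^ m * (k : ℝ) ^ m) ≤ (2 * (k : ℝ) ^ 2) ^ m := by
    rw [mul_pow, ← pow_mul, show 2 * m = m + m by ring, pow_add]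
    have : (4 : ℝ) ≤ 2 ^ m := by
      calc (4 : ℝ) = 2 ^ 2 := by norm_num
        _ ≤ 2 ^ m := pow_le_pow_right₀ (by norm_num) hm2
    nlinarith [pow_pos (show (0:ℝ) < k by linarith) m]
  have heq : ((k : ℝ) ^ m * (k : ℝ) ^ m) * Real.exp (-(m : ℝ) ^ 2 / 64)
      = ((k : ℝ) ^ m * (k : ℝ) ^ m) / Real.exp ((m : ℝ) ^ 2 / 64) := by
    rw [show -(m:ℝ)^2/64 = -((m:ℝ)^2/64) by ring, Real.exp_neg]
    ring
  rw [heq, div_lt_iff₀ hE]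
  nlinarith

/-- Existence of a symmetric ±1 matrix with nearly orthogonal rows and well-separated
principal submatrices indexed by disjoint subsets of size k/16 (η₀ = 1/16,
so η₀²k²/2 = k²/512). -/
theorem stmt_8 :
    ∃ k₀ : ℕ, ∀ k : ℕ, k₀ ≤ k → 16 ∣ k →
      ∃ B : Matrix (Fin k) (Fin k) ℝ,
        B.IsSymm ∧ (∀ a b, B a b = 1 ∨ B a b = -1) ∧
        (∀ a b : Fin k, a ≠ b → |∑ c, B a c * B b c| ≤ (k : ℝ) / 4) ∧
        ∀ X Y : Finset (Fin k), X.card = k / 16 → Y.card = k / 16 → Disjoint X Y →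
          ∀ π₁ π₂ : Fin (k / 16) → Fin k,
            Function.Injective π₁ → (∀ i, π₁ i ∈ X) →
            Function.Injective π₂ → (∀ i, π₂ i ∈ Y) →
            (k : ℝ) ^ 2 / 512 ≤ ∑ a, ∑ b, (B (π₁ a) (π₁ b) - B (π₂ a) (π₂ b)) ^ 2 := by
  classical
  refine ⟨18446744073709551616, fun k hk hdvd => ?_⟩
  set m := k / 16 with hmdef
  have hkm : k = 16 * m := by
    rw [hmdef]; exact (Nat.mul_div_cancel' hdvd).symm
  have hk40 : 40 ≤ k := by omega
  have hm4 : 4 ≤ m := by omega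
  set S := Fintype.card (Sym2 (Fin k)) with hS
  set bad1 : Finset (Sym2 (Fin k) → Bool) := univ.filter (fun g => ∃ p : Fin k × Fin k,
    p.1 ≠ p.2 ∧ (k : ℝ) / 4 < |∑ c, sg (g s(p.1, c)) * sg (g s(p.2, c))|) with hbad1
  set bad2 : Finset (Sym2 (Fin k) → Bool) := univ.filter
    (fun g => ∃ q : (Fin m → Fin k) × (Fin m → Fin k),
      Function.Injective q.1 ∧ Function.Injective q.2 ∧ (∀ i j, q.1 i ≠ q.2 j) ∧
      (∑ a, ∑ b, (sg (g s(q.1 a, q.1 b)) - sg (g s(q.2 a, q.2 b))) ^ 2) < (m : ℝ) ^ 2 / 2)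
    with hbad2
  -- bound on bad1
  have hb1 : (bad1.card : ℝ) ≤ (k : ℝ) ^ 2 * (2 ^ S * (2 * Real.exp (-(k : ℝ) / 100))) := by
    have hsub : bad1 ⊆ (univ : Finset (Fin k × Fin k)).biUnion (fun p =>
        univ.filter (fun g : Sym2 (Fin k) → Bool =>
          p.1 ≠ p.2 ∧ (k : ℝ) / 4 < |∑ c, sg (g s(p.1, c)) * sg (g s(p.2, c))|)) := by
      intro g hg
      obtain ⟨p, hp⟩ := (Finset.mem_filter.mp hg).2
      exact Finset.mem_biUnion.mpr ⟨p, Finset.mem_univ _,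
        Finset.mem_filter.mpr ⟨Finset.mem_univ _, hp⟩⟩
    have hcb := Finset.card_biUnion_le (s := (univ : Finset (Fin k × Fin k))) (t := fun p =>
        univ.filter (fun g : Sym2 (Fin k) → Bool =>
          p.1 ≠ p.2 ∧ (k : ℝ) / 4 < |∑ c, sg (g s(p.1, c)) * sg (g s(p.2, c))|))
    have hstep : ((bad1.card : ℕ) : ℝ) ≤ ∑ p : Fin k × Fin k,
        ((univ.filter (fun g : Sym2 (Fin k) → Bool =>
          p.1 ≠ p.2 ∧ (k : ℝ) / 4 < |∑ c, sg (g s(p.1, c)) * sg (g s(p.2, c))|)).card : ℝ) := by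
      have := (Finset.card_le_card hsub).trans hcb
      exact_mod_cast this
    refine hstep.trans ?_
    have hterm : ∀ p : Fin k × Fin k,
        ((univ.filter (fun g : Sym2 (Fin k) → Bool =>
          p.1 ≠ p.2 ∧ (k : ℝ) / 4 < |∑ c, sg (g s(p.1, c)) * sg (g s(p.2, c))|)).card : ℝ)
        ≤ 2 ^ S * (2 * Real.exp (-(k : ℝ) / 100)) := by
      intro p
      by_cases hp : p.1 = p.2
      · have : (univ.filter (fun g : Sym2 (Fin k) → Bool =>
          p.1 ≠ p.2 ∧ (k : ℝ) / 4 < |∑ c, sg (g s(p.1, c)) * sg (g s(p.2, c))|)) = ∅ := by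
          refine Finset.filter_eq_empty_iff.mpr fun g _ => ?_
          rintro ⟨h1, -⟩; exact h1 hp
        rw [this]; simp; positivity
      · refine le_trans ?_ (event1 hk40 p.1 p.2 hp)
        apply Nat.cast_le.mpr
        apply Finset.card_le_card
        intro g hg
        exact Finset.mem_filter.mpr ⟨Finset.mem_univ _, (Finset.mem_filter.mp hg).2.2⟩
    calc ∑ p : Fin k × Fin k, ((univ.filter (fun g : Sym2 (Fin k) → Bool =>
          p.1 ≠ p.2 ∧ (k : ℝ) / 4 < |∑ c, sg (g s(p.1, c)) * sg (g s(p.2, c))|)).card : ℝ)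
        ≤ ∑ _p : Fin k × Fin k, (2 ^ S * (2 * Real.exp (-(k : ℝ) / 100)) : ℝ) :=
          Finset.sum_le_sum fun p _ => hterm p
      _ = (k : ℝ) ^ 2 * (2 ^ S * (2 * Real.exp (-(k : ℝ) / 100))) := by
          rw [Finset.sum_const, card_univ]
          simp [sq]
  -- bound on bad2
  have hb2 : (bad2.card : ℝ) ≤ ((k : ℝ) ^ m * (k : ℝ) ^ m)
      * (2 ^ S * Real.exp (-(m : ℝ) ^ 2 / 64)) := by
    have hsub : bad2 ⊆ (univ : Finset ((Fin m → Fin k) × (Fin m → Fin k))).biUnion (fun q =>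
        univ.filter (fun g : Sym2 (Fin k) → Bool =>
          Function.Injective q.1 ∧ Function.Injective q.2 ∧ (∀ i j, q.1 i ≠ q.2 j) ∧
          (∑ a, ∑ b, (sg (g s(q.1 a, q.1 b)) - sg (g s(q.2 a, q.2 b))) ^ 2) < (m : ℝ) ^ 2 / 2)) := by
      intro g hg
      obtain ⟨q, hq⟩ := (Finset.mem_filter.mp hg).2
      exact Finset.mem_biUnion.mpr ⟨q, Finset.mem_univ _,
        Finset.mem_filter.mpr ⟨Finset.mem_univ _, hq⟩⟩
    have hstep : ((bad2.card : ℕ) : ℝ) ≤ ∑ q : (Fin m → Fin k) × (Fin m → Fin k),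
        ((univ.filter (fun g : Sym2 (Fin k) → Bool =>
          Function.Injective q.1 ∧ Function.Injective q.2 ∧ (∀ i j, q.1 i ≠ q.2 j) ∧
          (∑ a, ∑ b, (sg (g s(q.1 a, q.1 b)) - sg (g s(q.2 a, q.2 b))) ^ 2)
            < (m : ℝ) ^ 2 / 2)).card : ℝ) := by
      have := (Finset.card_le_card hsub).trans (Finset.card_biUnion_le)
      exact_mod_cast this
    refine hstep.trans ?_
    have hterm : ∀ q : (Fin m → Fin k) × (Fin m → Fin k),
        ((univ.filter (fun g : Sym2 (Fin k) → Bool =>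
          Function.Injective q.1 ∧ Function.Injective q.2 ∧ (∀ i j, q.1 i ≠ q.2 j) ∧
          (∑ a, ∑ b, (sg (g s(q.1 a, q.1 b)) - sg (g s(q.2 a, q.2 b))) ^ 2)
            < (m : ℝ) ^ 2 / 2)).card : ℝ)
        ≤ 2 ^ S * Real.exp (-(m : ℝ) ^ 2 / 64) := by
      intro q
      by_cases hq : Function.Injective q.1 ∧ Function.Injective q.2 ∧ (∀ i j, q.1 i ≠ q.2 j)
      · refine le_trans ?_ (event2 hm4 q.1 q.2 hq.1 hq.2.1 hq.2.2)
        apply Nat.cast_le.mpr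
        apply Finset.card_le_card
        intro g hg
        exact Finset.mem_filter.mpr ⟨Finset.mem_univ _, (Finset.mem_filter.mp hg).2.2.2.2⟩
      · have : (univ.filter (fun g : Sym2 (Fin k) → Bool =>
          Function.Injective q.1 ∧ Function.Injective q.2 ∧ (∀ i j, q.1 i ≠ q.2 j) ∧
          (∑ a, ∑ b, (sg (g s(q.1 a, q.1 b)) - sg (g s(q.2 a, q.2 b))) ^ 2)
            < (m : ℝ) ^ 2 / 2)) = ∅ := by
          refine Finset.filter_eq_empty_iff.mpr fun g _ => ?_
          rintro ⟨h1, h2, h3, -⟩; exact hq ⟨h1, h2, h3⟩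
        rw [this]; simp; positivity
    calc ∑ q : (Fin m → Fin k) × (Fin m → Fin k), ((univ.filter (fun g : Sym2 (Fin k) → Bool =>
          Function.Injective q.1 ∧ Function.Injective q.2 ∧ (∀ i j, q.1 i ≠ q.2 j) ∧
          (∑ a, ∑ b, (sg (g s(q.1 a, q.1 b)) - sg (g s(q.2 a, q.2 b))) ^ 2)
            < (m : ℝ) ^ 2 / 2)).card : ℝ)
        ≤ ∑ _q : (Fin m → Fin k) × (Fin m → Fin k),
            (2 ^ S * Real.exp (-(m : ℝ) ^ 2 / 64) : ℝ) :=
          Finset.sum_le_sum fun q _ => hterm q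
      _ = ((k : ℝ) ^ m * (k : ℝ) ^ m) * (2 ^ S * Real.exp (-(m : ℝ) ^ 2 / 64)) := by
          rw [Finset.sum_const, card_univ]
          simp [Fintype.card_fun]
  -- existence of a good g
  have hcardΩ : (Fintype.card (Sym2 (Fin k) → Bool) : ℝ) = 2 ^ S := by
    rw [Fintype.card_fun, Fintype.card_bool]
    push_cast
    rfl
  have hgood : ∃ g : Sym2 (Fin k) → Bool, g ∉ bad1 ∧ g ∉ bad2 := by
    by_contra hcon
    push_neg at hcon
    have hunion : (univ : Finset (Sym2 (Fin k) → Bool)) ⊆ bad1 ∪ bad2 := by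
      intro g _
      rcases Classical.em (g ∈ bad1) with h | h
      · exact Finset.mem_union_left _ h
      · exact Finset.mem_union_right _ (hcon g h)
    have h1 : (2 ^ S : ℝ) ≤ (bad1.card : ℝ) + (bad2.card : ℝ) := by
      have := (Finset.card_le_card hunion).trans (Finset.card_union_le _ _)
      rw [Finset.card_univ] at this
      have := (Nat.cast_le (α := ℝ)).mpr this
      push_cast at this
      rw [← hcardΩ]
      exact_mod_cast this
    have hn1 := num1 k hk
    have hn2 := num2 k m hk hkm
    have hp : (0:ℝ) < 2 ^ S := by positivity
    nlinarith [hb1, hb2, hn1, hn2]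
  obtain ⟨g, hg1, hg2⟩ := hgood
  refine ⟨fun a b => sg (g s(a, b)), ?_, ?_, ?_, ?_⟩
  · show Matrix.transpose _ = _
    funext a b
    show sg (g s(b, a)) = sg (g s(a, b))
    rw [Sym2.eq_swap]
  · intro a b
    rcases Bool.dichotomy (g s(a, b)) with h | h <;> [right; left] <;> simp [sg, h]
  · intro a b hab
    by_contra hcon
    push_neg at hcon
    apply hg1
    rw [hbad1, Finset.mem_filter]
    exact ⟨Finset.mem_univ _, ⟨(a, b), hab, hcon⟩⟩
  · intro X Y hX hY hXY π₁ π₂ hπ₁ hπ₁X hπ₂ hπ₂Y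
    have hd : ∀ i j, π₁ i ≠ π₂ j := by
      intro i j h
      exact Finset.disjoint_left.mp hXY (hπ₁X i) (h ▸ hπ₂Y j)
    have hval : (k : ℝ) ^ 2 / 512 = (m : ℝ) ^ 2 / 2 := by
      have : (k : ℝ) = 16 * (m : ℝ) := by exact_mod_cast hkm
      rw [this]; ring
    rw [hval]
    by_contra hcon
    push_neg at hcon
    apply hg2
    rw [hbad2, Finset.mem_filter]
    exact ⟨Finset.mem_univ _, ⟨(π₁, π₂), hπ₁, hπ₂, hd, hcon⟩⟩
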